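/- Let N ≥ 2 and K be integers with 1 ≤ K ≤ N − 1, let R > 0 and c > 0, and let F : [0,1] → [0,1] be continuously differentiable, nondecreasing, with F(0) = 0 and F(1) = 1. Define T(x) = Σ_{j=0}^{K−1} C(N−1, j) F(x)^{N−1−j} (1−F(x))^j and β(x) = (R·(N−1)/(c·K)) · C(N−2, K−1) · ∫_0^x t · F(t)^{N−K−1} · (1−F(t))^{K−1} · F′(t) dt, and assume β(x) ≤ x for all x ∈ [0,1]. Then for every q ∈ (0,1] and every x ∈ [0,1], (R/K)·T(x) − c·β(x)/q ≤ (R/K)·T(q) − c·β(q)/q. -/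

import Mathlib

open Finset

/-- The probability that a user contributing the quality associated with type
`x` is among the top `K` of `N` users whose types are i.i.d. with CDF `F`. -/
noncomputable def topKProb (N K : ℕ) (F : ℝ → ℝ) (x : ℝ) : ℝ :=
  ∑ j ∈ Finset.range K,
    ((N - 1).choose j : ℝ) * F x ^ (N - 1 - j) * (1 - F x) ^ j

/-- The candidate symmetric equilibrium strategy of mechanism M6. -/
noncomputable def strat (N K : ℕ) (R c : ℝ) (F : ℝ → ℝ) (x : ℝ) : ℝ :=
  R * ((N : ℝ) - 1) / (c * K) * ((N - 2).choose (K - 1) : ℝ) *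
    ∫ t in (0 : ℝ)..x,
      t * F t ^ (N - K - 1) * (1 - F t) ^ (K - 1) * deriv F t

/-- telescoping derivative of the binomial sum -/
lemma sum_hasDerivAt (n K : ℕ) (hK : 1 ≤ K) (hKn : K ≤ n) (y : ℝ) :
    HasDerivAt (fun y : ℝ => ∑ j ∈ Finset.range K,
        (n.choose j : ℝ) * y ^ (n - j) * (1 - y) ^ j)
      ((n : ℝ) * ((n - 1).choose (K - 1) : ℝ) * y ^ (n - K) * (1 - y) ^ (K - 1)) y := by
  set f : ℕ → ℝ := fun j =>
    if j = 0 then 0 else (n : ℝ) * ((n - 1).choose (j - 1) : ℝ) * y ^ (n - j) * (1 - y) ^ (j - 1)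
    with hf
  have key : ∀ j ∈ Finset.range K,
      HasDerivAt (fun y : ℝ => (n.choose j : ℝ) * y ^ (n - j) * (1 - y) ^ j)
        (f (j + 1) - f j) y := by
    intro j hj
    rw [Finset.mem_range] at hj
    have hjn : j + 1 ≤ n := le_trans hj hKn
    have h1 : HasDerivAt (fun y : ℝ => y ^ (n - j)) ((n - j : ℕ) * y ^ (n - j - 1)) y :=
      hasDerivAt_pow _ _
    have h2 : HasDerivAt (fun y : ℝ => (1 - y) ^ j) (-(j * (1 - y) ^ (j - 1))) y := by
      have h3 : HasDerivAt (fun y : ℝ => 1 - y) (-1) y := by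
        simpa using (hasDerivAt_id y).const_sub 1
      have := (hasDerivAt_pow j (1 - y)).comp y h3
      exact this.congr_deriv (by ring)
    have h4 := ((h1.const_mul (n.choose j : ℝ)).mul h2)
    refine h4.congr_deriv ?_
    symm
    have c1 : (n.choose j : ℝ) * ((n - j : ℕ) : ℝ) = (n : ℝ) * ((n - 1).choose j : ℝ) := by
      have hnat : (n - 1).choose j * n = n.choose j * (n - j) := by
        have h := Nat.choose_mul_succ_eq (n - 1) j
        have hn1 : n - 1 + 1 = n := by omega
        rw [hn1] at h
        exact h
      have hcast := congrArg (fun m : ℕ => (m : ℝ)) hnat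
      simp only [Nat.cast_mul] at hcast
      linear_combination -hcast
    rcases Nat.eq_zero_or_pos j with hj0 | hjpos
    · subst hj0
      simp only [hf, if_neg one_ne_zero, if_pos rfl, sub_zero, Nat.sub_zero,
        Nat.choose_zero_right, Nat.cast_one, one_mul, pow_zero, mul_one, Nat.cast_zero,
        zero_mul, neg_zero, mul_zero, add_zero, Nat.add_sub_cancel]
      norm_num
    · have c2 : (n.choose j : ℝ) * (j : ℝ) = (n : ℝ) * ((n - 1).choose (j - 1) : ℝ) := by
        have h := Nat.add_one_mul_choose_eq (n - 1) (j - 1)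
        have e1 : n - 1 + 1 = n := by omega
        have e2 : j - 1 + 1 = j := by omega
        rw [e1, e2] at h
        have hcast := congrArg (fun m : ℕ => (m : ℝ)) h
        simp only [Nat.cast_mul] at hcast
        linear_combination -hcast
      simp only [hf, if_neg (Nat.succ_ne_zero j), if_neg hjpos.ne', Nat.add_sub_cancel]
      rw [show n - (j + 1) = n - j - 1 from by omega]
      linear_combination (-(y ^ (n - j - 1) * (1 - y) ^ j)) * c1
        + (y ^ (n - j) * (1 - y) ^ (j - 1)) * c2
  have hsum := HasDerivAt.fun_sum key
  have htel : ∑ j ∈ Finset.range K, (f (j + 1) - f j) = f K - f 0 := Finset.sum_range_sub f K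
  rw [htel] at hsum
  have hK0 : K ≠ 0 := by omega
  simpa only [hf, if_neg hK0, if_pos rfl, sub_zero] using hsum

/-- derivative of F is nonneg on [0,1] -/
lemma deriv_nonneg_aux (F : ℝ → ℝ) (hFdiff : ContDiff ℝ 1 F)
    (hFmono : MonotoneOn F (Set.Icc 0 1)) :
    ∀ t ∈ Set.Icc (0 : ℝ) 1, 0 ≤ deriv F t := by
  intro t ht
  obtain ⟨ht0, ht1⟩ := ht
  have hdF : HasDerivAt F (deriv F t) t :=
    ((hFdiff.differentiable one_ne_zero) t).hasDerivAt
  rcases lt_or_eq_of_le ht1 with ht1' | rfl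
  · have h := hdF.hasDerivWithinAt (s := Set.Ioi t)
    rw [hasDerivWithinAt_iff_tendsto_slope' (Set.notMem_Ioi.2 le_rfl)] at h
    refine ge_of_tendsto h ?_
    filter_upwards [Ioc_mem_nhdsGT ht1'] with y hy
    have hy1 : y ∈ Set.Icc (0 : ℝ) 1 := ⟨le_trans ht0 hy.1.le, hy.2⟩
    have hle : F t ≤ F y := hFmono ⟨ht0, ht1⟩ hy1 hy.1.le
    have hyt : 0 < y - t := by linarith [hy.1]
    rw [slope_def_field]
    exact div_nonneg (by linarith) hyt.le
  · have h := hdF.hasDerivWithinAt (s := Set.Iio 1)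
    rw [hasDerivWithinAt_iff_tendsto_slope' (Set.notMem_Iio.2 le_rfl)] at h
    refine ge_of_tendsto h ?_
    filter_upwards [Ico_mem_nhdsLT (show (0:ℝ) < 1 by norm_num)] with y hy
    have hy1 : y ∈ Set.Icc (0 : ℝ) 1 := ⟨hy.1, hy.2.le⟩
    have hle : F y ≤ F 1 := hFmono hy1 ⟨ht0, le_refl 1⟩ hy.2.le
    have hyt : y - 1 ≤ 0 := by linarith [hy.2]
    rw [slope_def_field]
    exact div_nonneg_of_nonpos (by linarith) hyt

theorem stmt_15 (N K : ℕ) (hN : 2 ≤ N) (hK : 1 ≤ K) (hKN : K ≤ N - 1)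
    (R c : ℝ) (hR : 0 < R) (hc : 0 < c)
    (F : ℝ → ℝ) (hFdiff : ContDiff ℝ 1 F)
    (hFmono : MonotoneOn F (Set.Icc 0 1)) (hF0 : F 0 = 0) (hF1 : F 1 = 1)
    (hfeas : ∀ x ∈ Set.Icc (0 : ℝ) 1, strat N K R c F x ≤ x) :
    ∀ q ∈ Set.Ioc (0 : ℝ) 1, ∀ x ∈ Set.Icc (0 : ℝ) 1,
      R / K * topKProb N K F x - c * strat N K R c F x / q ≤
        R / K * topKProb N K F q - c * strat N K R c F q / q := by
  intro q hq x hx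
  obtain ⟨hq0, hq1⟩ := hq
  obtain ⟨hx0, hx1⟩ := hx
  have hF'cont : Continuous (deriv F) := hFdiff.continuous_deriv le_rfl
  have hFc : Continuous F := hFdiff.continuous
  have hKpos : (0:ℝ) < K := by exact_mod_cast hK
  set C : ℝ := ((N - 2).choose (K - 1) : ℝ) with hC
  set ψ : ℝ → ℝ := fun t => F t ^ (N - 1 - K) * (1 - F t) ^ (K - 1) * deriv F t with hψ
  have hψcont : Continuous ψ := by fun_prop
  set G : ℝ → ℝ := fun t => ((N - 1 : ℕ) : ℝ) * C * ψ t with hG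
  have hGcont : Continuous G := by fun_prop
  have hderivT : ∀ t : ℝ, HasDerivAt (topKProb N K F) (G t) t := by
    intro t
    have hsd := sum_hasDerivAt (N - 1) K hK hKN (F t)
    have hdF : HasDerivAt F (deriv F t) t := ((hFdiff.differentiable one_ne_zero) t).hasDerivAt
    have hcomp := hsd.comp t hdF
    have h5 : topKProb N K F = (fun y : ℝ => ∑ j ∈ Finset.range K,
        ((N - 1).choose j : ℝ) * y ^ (N - 1 - j) * (1 - y) ^ j) ∘ F := rfl
    rw [h5]
    refine hcomp.congr_deriv ?_
    rw [show N - 1 - 1 = N - 2 from by omega]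
    simp only [hG, hψ, hC]
    ring
  have hT : ∫ t in x..q, G t = topKProb N K F q - topKProb N K F x :=
    intervalIntegral.integral_eq_sub_of_hasDerivAt (fun t _ => hderivT t)
      (hGcont.intervalIntegrable x q)
  set h : ℝ → ℝ := fun t => t * F t ^ (N - K - 1) * (1 - F t) ^ (K - 1) * deriv F t with hh
  have hhcont : Continuous h := by fun_prop
  set Cst : ℝ := R * ((N : ℝ) - 1) / (c * K) * C with hCst
  have hstrat : strat N K R c F q - strat N K R c F x = Cst * ∫ t in x..q, h t := by
    simp only [strat, hCst, hC, hh]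
    rw [← mul_sub]
    congr 1
    rw [← intervalIntegral.integral_interval_sub_left (hhcont.intervalIntegrable 0 q)
      (hhcont.intervalIntegrable 0 x)]
  have hqne : q ≠ 0 := hq0.ne'
  have hcne : c ≠ 0 := hc.ne'
  have hKne : (K:ℝ) ≠ 0 := hKpos.ne'
  have hNcast : ((N - 1 : ℕ) : ℝ) = (N : ℝ) - 1 := by
    have h1 : 1 ≤ N := by omega
    push_cast [h1]; ring
  set D : ℝ := R * ((N : ℝ) - 1) * C / K with hD
  have hpt : ∀ t : ℝ, D * ((1 - t / q) * ψ t) = R / (K:ℝ) * G t - c * Cst / q * h t := by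
    intro t
    simp only [hG, hh, hD, hCst, hψ, hNcast]
    rw [show N - K - 1 = N - 1 - K from by omega]
    field_simp
  have hkey : R / (K:ℝ) * (∫ t in x..q, G t) - c * (Cst * ∫ t in x..q, h t) / q
      = ∫ t in x..q, D * ((1 - t / q) * ψ t) := by
    have e1 : (∫ t in x..q, D * ((1 - t / q) * ψ t))
        = ∫ t in x..q, (R / (K:ℝ) * G t - c * Cst / q * h t) := by
      apply intervalIntegral.integral_congr
      intro t _
      exact hpt t
    have e2 : (∫ t in x..q, (R / (K:ℝ) * G t - c * Cst / q * h t))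
        = R / (K:ℝ) * (∫ t in x..q, G t) - c * Cst / q * (∫ t in x..q, h t) := by
      rw [intervalIntegral.integral_sub
        ((hGcont.intervalIntegrable x q).const_mul _)
        ((hhcont.intervalIntegrable x q).const_mul _)]
      congr 1
      · exact intervalIntegral.integral_const_mul _ _
      · exact intervalIntegral.integral_const_mul _ _
    rw [e1, e2]
    ring
  have hψnn : ∀ t ∈ Set.Icc (0:ℝ) 1, 0 ≤ ψ t := by
    intro t ht
    have h1 : 0 ≤ F t := hF0 ▸ hFmono (Set.left_mem_Icc.2 zero_le_one) ht ht.1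
    have h2 : F t ≤ 1 := hF1 ▸ hFmono ht (Set.right_mem_Icc.2 zero_le_one) ht.2
    have h3 := deriv_nonneg_aux F hFdiff hFmono t ht
    exact mul_nonneg (mul_nonneg (pow_nonneg h1 _) (pow_nonneg (by linarith) _)) h3
  have hN1 : (0:ℝ) ≤ (N:ℝ) - 1 := by
    have h2 : (2:ℝ) ≤ (N:ℝ) := by exact_mod_cast hN
    linarith
  have hCnn : (0:ℝ) ≤ C := by rw [hC]; positivity
  have hDnn : 0 ≤ D := by
    rw [hD]
    exact div_nonneg (mul_nonneg (mul_nonneg hR.le hN1) hCnn) hKpos.le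
  have hint : 0 ≤ ∫ t in x..q, D * ((1 - t / q) * ψ t) := by
    rcases le_total x q with hxq | hqx
    · apply intervalIntegral.integral_nonneg hxq
      intro u hu
      have hu01 : u ∈ Set.Icc (0:ℝ) 1 := ⟨le_trans hx0 hu.1, le_trans hu.2 hq1⟩
      have huq : u / q ≤ 1 := (div_le_one hq0).2 hu.2
      exact mul_nonneg hDnn (mul_nonneg (by linarith) (hψnn u hu01))
    · rw [intervalIntegral.integral_symm]
      have hneg : 0 ≤ ∫ t in q..x, -(D * ((1 - t / q) * ψ t)) := by
        apply intervalIntegral.integral_nonneg hqx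
        intro u hu
        have hu01 : u ∈ Set.Icc (0:ℝ) 1 := ⟨le_trans hq0.le hu.1, le_trans hu.2 hx1⟩
        have huq : 1 ≤ u / q := (one_le_div hq0).2 hu.1
        have hmn : (1 - u / q) * ψ u ≤ 0 :=
          mul_nonpos_of_nonpos_of_nonneg (by linarith) (hψnn u hu01)
        nlinarith [mul_nonneg hDnn (neg_nonneg.2 hmn)]
      rw [intervalIntegral.integral_neg] at hneg
      linarith
  have hgoal : R / (K:ℝ) * topKProb N K F q - c * strat N K R c F q / q
      - (R / (K:ℝ) * topKProb N K F x - c * strat N K R c F x / q)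
      = R / (K:ℝ) * (∫ t in x..q, G t) - c * (Cst * ∫ t in x..q, h t) / q := by
    rw [hT, ← hstrat]
    ring
  have h0 : 0 ≤ R / (K:ℝ) * (∫ t in x..q, G t) - c * (Cst * ∫ t in x..q, h t) / q := by
    rw [hkey]; exact hint
  linarith [hgoal, h0]
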